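/- arXiv:2201.02907 — 2 statements merged into one kernel-verified Lean document; each statement's English description precedes it below -/
import Mathlib

section
/- Let a₀, a₁ ≥ 0, k_p > 0, k_{d₁} > 8, and define A₀ = 1 + k_{d₁} + 3ω₀ + 3k_{d₁}ω₀, A₁ = a₁(1 + k_{d₁}), A₂ = a₀(1+k_{d₁}) + k_p + 3k_pω₀ + 3ω₀² + 3k_{d₁}ω₀² + ω₀³ + k_{d₁}ω₀³, A₃ = a₁k_p + 3a₁ω₀ + 3a₁k_{d₁}ω₀ + 3a₁ω₀², A₄ = a₀k_p + 3a₀ω₀ + 3a₀k_{d₁}ω₀ + 3a₀ω₀² + 3k_pω₀² + k_pω₀³. Then A₀ > 0, A₂ > 0, A₄ > 0 for all ω₀ > 0, and if a₁ > 0 there exists Ω > 0 such that for all ω₀ > Ω, the Routh–Hurwitz conditions A₁A₂ > A₀A₃ and A₁A₂A₃ > A₀A₃² + A₁²A₄ hold. -/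
set_option maxHeartbeats 1000000 in
theorem stmt_9 (a₀ a₁ kp kd1 : ℝ) (ha₀ : 0 ≤ a₀) (ha₁ : 0 ≤ a₁)
    (hkp : 0 < kp) (hkd : 8 < kd1)
    (A₀ A₁ A₂ A₃ A₄ : ℝ → ℝ)
    (hA₀ : ∀ ω₀, A₀ ω₀ = 1 + kd1 + 3 * ω₀ + 3 * kd1 * ω₀)
    (hA₁ : ∀ ω₀, A₁ ω₀ = a₁ * (1 + kd1))
    (hA₂ : ∀ ω₀, A₂ ω₀ = a₀ * (1 + kd1) + kp + 3 * kp * ω₀ + 3 * ω₀ ^ 2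
      + 3 * kd1 * ω₀ ^ 2 + ω₀ ^ 3 + kd1 * ω₀ ^ 3)
    (hA₃ : ∀ ω₀, A₃ ω₀ = a₁ * kp + 3 * a₁ * ω₀ + 3 * a₁ * kd1 * ω₀ + 3 * a₁ * ω₀ ^ 2)
    (hA₄ : ∀ ω₀, A₄ ω₀ = a₀ * kp + 3 * a₀ * ω₀ + 3 * a₀ * kd1 * ω₀ + 3 * a₀ * ω₀ ^ 2
      + 3 * kp * ω₀ ^ 2 + kp * ω₀ ^ 3) :
    (∀ ω₀ : ℝ, 0 < ω₀ → 0 < A₀ ω₀ ∧ 0 < A₂ ω₀ ∧ 0 < A₄ ω₀) ∧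
    (0 < a₁ → ∃ Ω > 0, ∀ ω₀ > Ω,
      A₁ ω₀ * A₂ ω₀ > A₀ ω₀ * A₃ ω₀ ∧
      A₁ ω₀ * A₂ ω₀ * A₃ ω₀ > A₀ ω₀ * (A₃ ω₀) ^ 2 + (A₁ ω₀) ^ 2 * A₄ ω₀) := by
  have hKpos : (0:ℝ) < 1 + kd1 := by linarith
  constructor
  · intro ω₀ hω
    refine ⟨?_, ?_, ?_⟩
    · rw [hA₀]; nlinarith
    · rw [hA₂]
      nlinarith [pow_pos hω 2, pow_pos hω 3, mul_nonneg ha₀ hKpos.le,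
        mul_nonneg (by linarith : (0:ℝ) ≤ kd1) (pow_pos hω 2).le,
        mul_nonneg (by linarith : (0:ℝ) ≤ kd1) (pow_pos hω 3).le,
        mul_pos hkp hω]
    · rw [hA₄]
      nlinarith [pow_pos hω 2, pow_pos hω 3, mul_nonneg ha₀ hkp.le,
        mul_nonneg ha₀ hω.le, mul_nonneg (mul_nonneg ha₀ (by linarith : (0:ℝ) ≤ kd1)) hω.le,
        mul_nonneg ha₀ (pow_pos hω 2).le, mul_pos hkp (pow_pos hω 2),
        mul_pos hkp (pow_pos hω 3)]
  · intro ha₁p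
    set C : ℝ := 27*kd1^2 + 111*kd1 + 96 + (12*kd1+24)*kp with hCdef
    have hCpos : 0 < C := by nlinarith
    have hden : (0:ℝ) < 3*(kd1-8) := by linarith
    refine ⟨1 + C/(3*(kd1-8)), by positivity, ?_⟩
    intro ω hω
    have hω1 : 1 < ω := by
      have : (0:ℝ) < C/(3*(kd1-8)) := div_pos hCpos hden
      linarith
    have hωpos : 0 < ω := by linarith
    have hbig : 3*(kd1-8)*ω > 3*(kd1-8) + C := by
      have h1 : C/(3*(kd1-8)) < ω - 1 := by linarith
      have h2 : C < (ω - 1) * (3*(kd1-8)) := (div_lt_iff₀ hden).mp h1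
      nlinarith
    rw [hA₀ ω, hA₁ ω, hA₂ ω, hA₃ ω, hA₄ ω]
    have hωsq : ω ≤ ω^2 := by nlinarith
    have hKω : 9*kd1 + 12 < (kd1-8)*ω := by nlinarith
    -- first Routh–Hurwitz condition
    have key1 : 0 < a₀*(1+kd1) - 3*(1+kd1)*ω - (6*kd1+9)*ω^2 + (kd1-8)*ω^3 := by
      have h1 : (9*kd1+12)*ω^2 < ((kd1-8)*ω)*ω^2 :=
        mul_lt_mul_of_pos_right hKω (pow_pos hωpos 2)
      nlinarith [mul_nonneg ha₀ hKpos.le,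
        mul_nonneg (by linarith : (0:ℝ) ≤ 3*(1+kd1)) (by nlinarith : (0:ℝ) ≤ ω^2 - ω)]
    constructor
    · nlinarith [mul_pos (mul_pos ha₁p hKpos) key1]
    · -- second Routh–Hurwitz condition
      have h4 : 0 < ω^4 := pow_pos hωpos 4
      have hmain : 0 < (3*(kd1-8)*ω - C)*ω^4 :=
        mul_pos (by linarith) h4
      have h43 : 0 ≤ ω^4 - ω^3 := by nlinarith [pow_pos hωpos 3]
      have h42 : 0 ≤ ω^4 - ω^2 := by nlinarith [pow_pos hωpos 2, pow_pos hωpos 3]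
      have h41 : 0 ≤ ω^4 - ω := by nlinarith [pow_pos hωpos 2, pow_pos hωpos 3]
      have p43 : 0 ≤ (9*kp + 18*kd1^2 + 54*kd1 + 36) * (ω^4 - ω^3) :=
        mul_nonneg (by nlinarith) h43
      have p42 : 0 ≤ ((9*kd1+12)*kp + 9*(1+kd1)^2) * (ω^4 - ω^2) :=
        mul_nonneg (by nlinarith) h42
      have p41 : 0 ≤ (3*(1+kd1)*kp) * (ω^4 - ω) :=
        mul_nonneg (by nlinarith) h41
      have p44 : 0 ≤ (3*kd1^2) * ω^4 :=
        mul_nonneg (by nlinarith) h4.le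
      have keyE : 0 < (3*kd1-24)*ω^5 + (3*kd1^2-39*kd1-51)*ω^4
          - (9*kp+18*kd1^2+54*kd1+36)*ω^3 - ((9*kd1+12)*kp+9*(1+kd1)^2)*ω^2
          - 3*(1+kd1)*kp*ω := by
        nlinarith [hmain, p43, p42, p41, p44]
      nlinarith [mul_pos (mul_pos (mul_pos ha₁p ha₁p) hKpos) keyE]
end

section
/- Consider the error dynamics matrix A - L C where A is the (n+1)×(n+1) matrix with A[i][i+1] = 1 for i = 1,…,n and zeros elsewhere, C = [1, 0, …, 0], and L = [β₁, …, β_{n+1}]ᵀ with β_i = C(n+1,i)ω₀^i, ω₀ > 0. Then the characteristic polynomial of A - L C equals (s + ω₀)^{n+1}, so all eigenvalues of A - L C equal -ω₀. -/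
open Polynomial

noncomputable def Mk (β : ℕ → ℝ) (k : ℕ) : Matrix (Fin (k+1)) (Fin (k+1)) ℝ[X] :=
  Matrix.of fun i j => (if (i:ℕ) = (j:ℕ) then X else 0) + (if (j:ℕ) = (i:ℕ) + 1 then -1 else 0)
    + (if (j:ℕ) = 0 then C (β ((i:ℕ)+1)) else 0)

lemma det_Mk (β : ℕ → ℝ) (k : ℕ) :
    (Mk β k).det = X^(k+1) + ∑ i ∈ Finset.range (k+1), C (β (i+1)) * X^(k-i) := by
  induction k with
  | zero => simp [Mk, Matrix.det_fin_one]
  | succ k ih =>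
    rw [Matrix.det_succ_row (Mk β (k+1)) (Fin.last (k+1))]
    have h0 : (0 : Fin (k+2)) ≠ Fin.last (k+1) := by
      simp [Fin.ext_iff]
    have hzero : ∀ c ∈ (Finset.univ : Finset (Fin (k+2))) \ {0, Fin.last (k+1)},
        (-1 : ℝ[X])^((Fin.last (k+1) : ℕ) + (c:ℕ)) * (Mk β (k+1)) (Fin.last (k+1)) c *
          ((Mk β (k+1)).submatrix (Fin.last (k+1)).succAbove c.succAbove).det = 0 := by
      intro c hc
      simp only [Finset.mem_sdiff, Finset.mem_insert, Finset.mem_singleton] at hc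
      have h1 : (c : ℕ) ≠ 0 := fun h => hc.2 (Or.inl (Fin.ext h))
      have h2 : (c : ℕ) ≠ k + 1 := fun h => hc.2 (Or.inr (Fin.ext h))
      have h3 : (c : ℕ) < k + 2 := c.isLt
      have : (Mk β (k+1)) (Fin.last (k+1)) c = 0 := by
        simp only [Mk, Matrix.of_apply, Fin.val_last]
        rw [if_neg (by omega), if_neg (by omega), if_neg h1]
        ring
      rw [this]; ring
    rw [← Finset.sum_subset (Finset.subset_univ ({0, Fin.last (k+1)} : Finset (Fin (k+2))))
        (fun c _ hc => hzero c (by simp [hc]))]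
    rw [Finset.sum_pair h0]
    have hm_last : (Mk β (k+1)).submatrix (Fin.last (k+1)).succAbove (Fin.last (k+1)).succAbove
        = Mk β k := by
      ext i j
      simp [Mk, Fin.succAbove_last, Matrix.submatrix_apply]
    have hm0 : ((Mk β (k+1)).submatrix (Fin.last (k+1)).succAbove
        ((0 : Fin (k+2)).succAbove)).det = (-1)^(k+1) := by
      have htri : ((Mk β (k+1)).submatrix (Fin.last (k+1)).succAbove
          ((0 : Fin (k+2)).succAbove)).BlockTriangular OrderDual.toDual := by
        intro i j hij
        have hij' : (i:ℕ) < (j:ℕ) := hij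
        simp only [Matrix.submatrix_apply, Fin.succAbove_last, Fin.zero_succAbove, Mk,
          Matrix.of_apply, Fin.coe_castSucc, Fin.val_succ]
        split_ifs <;> (try ring) <;> (try omega) <;> exact ‹False›.elim
      rw [Matrix.det_of_lowerTriangular _ htri]
      have hd : ∀ i : Fin (k+1), Mk β (k+1) (Fin.castSucc i) (Fin.succ i) = -1 := by
        intro i
        simp only [Mk, Matrix.of_apply, Fin.coe_castSucc, Fin.val_succ]
        split_ifs <;> (try ring) <;> (try omega) <;> exact ‹False›.elim
      simp only [Matrix.diag, Matrix.submatrix_apply, Fin.succAbove_last, Fin.zero_succAbove]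
      rw [Finset.prod_congr rfl fun i _ => hd i, Finset.prod_const]
      simp
    have hv0 : (Mk β (k+1)) (Fin.last (k+1)) 0 = C (β (k+1+1)) := by
      simp only [Mk, Matrix.of_apply, Fin.val_last, Fin.val_zero]
      split_ifs <;> (try ring) <;> (try omega) <;> exact ‹False›.elim
    have hvl : (Mk β (k+1)) (Fin.last (k+1)) (Fin.last (k+1)) = X := by
      simp only [Mk, Matrix.of_apply, Fin.val_last]
      split_ifs <;> (try ring) <;> (try omega) <;> exact ‹False›.elim
    have hsgn : ((-1 : ℝ[X])) ^ ((Fin.last (k+1)).val + (0 : Fin (k+2)).val) * (-1)^(k+1)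
        = 1 := by
      simp only [Fin.val_last, Fin.val_zero, Nat.add_zero]
      rw [← pow_add]
      exact Even.neg_one_pow ⟨k+1, by ring⟩
    have hsgn2 : ((-1 : ℝ[X])) ^ ((Fin.last (k+1)).val + (Fin.last (k+1)).val) = 1 := by
      simp only [Fin.val_last]
      exact Even.neg_one_pow ⟨k+1, by ring⟩
    have hX : X * (X ^ (k + 1) + ∑ i ∈ Finset.range (k + 1), C (β (i + 1)) * X ^ (k - i))
        = X ^ (k + 2) + ∑ i ∈ Finset.range (k + 1), C (β (i + 1)) * X ^ (k + 1 - i) := by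
      rw [mul_add, Finset.mul_sum, ← pow_succ']
      congr 1
      refine Finset.sum_congr rfl fun i hi => ?_
      have : k + 1 - i = (k - i) + 1 := by
        have := Finset.mem_range.mp hi; omega
      rw [this, pow_succ]; ring
    rw [hm_last, hm0, hv0, hvl, ih]
    rw [mul_right_comm, hsgn, hsgn2, one_mul, one_mul]
    conv_rhs => rw [Finset.sum_range_succ]
    rw [hX]
    simp only [Nat.sub_self, pow_zero, mul_one]
    ring

theorem stmt_15 (n : ℕ) (hn : 1 ≤ n) (ω₀ : ℝ) (hω : 0 < ω₀)
    (β : ℕ → ℝ) (hβ : ∀ i, 1 ≤ i → i ≤ n + 1 → β i = (n + 1).choose i * ω₀ ^ i)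
    (A L : Matrix (Fin (n + 1)) (Fin (n + 1)) ℝ)
    (hA : ∀ i j : Fin (n + 1), A i j = if (j : ℕ) = (i : ℕ) + 1 then 1 else 0)
    (hL : ∀ i j : Fin (n + 1), L i j = if (j : ℕ) = 0 then β ((i : ℕ) + 1) else 0) :
    (A - L).charpoly = (X + C ω₀) ^ (n + 1) ∧
    ∀ μ : ℝ, (A - L).charpoly.IsRoot μ → μ = -ω₀ := by
  have hch : Matrix.charmatrix (A - L) = Mk β n := by
    ext i j
    have hentry : (A - L) i j = (if (j:ℕ) = (i:ℕ)+1 then 1 else 0)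
        - (if (j:ℕ) = 0 then β ((i:ℕ)+1) else 0) := by
      simp [Matrix.sub_apply, hA, hL]
    rw [Matrix.charmatrix_apply, hentry]
    simp only [Matrix.diagonal_apply, Mk, Matrix.of_apply, map_sub, apply_ite C, map_one, map_zero,
      Fin.ext_iff]
    split_ifs <;> (try ring) <;> (try omega) <;> exact ‹False›.elim
  have hsum : ∑ i ∈ Finset.range (n+1), C (β (i+1)) * X^(n-i)
      = ∑ m ∈ Finset.range (n+1), X ^ m * C ω₀ ^ (n + 1 - m) * ((n+1).choose m : ℝ[X]) := by
    rw [← Finset.sum_range_reflect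
      (fun m => X ^ m * C ω₀ ^ (n + 1 - m) * ((n+1).choose m : ℝ[X])) (n+1)]
    refine Finset.sum_congr rfl fun i hi => ?_
    have hi' : i ≤ n := by have := Finset.mem_range.mp hi; omega
    have e1 : n + 1 - 1 - i = n - i := by omega
    have e2 : n + 1 - (n - i) = i + 1 := by omega
    have e3 : (n+1).choose (n - i) = (n+1).choose (i+1) := by
      rw [← Nat.choose_symm (by omega : n - i ≤ n + 1), e2]
    rw [e1, e2, e3, hβ (i+1) (by omega) (by omega)]
    push_cast
    rw [map_mul, map_pow, map_natCast]
    ring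
  have hcp : (A - L).charpoly = (X + C ω₀) ^ (n + 1) := by
    rw [Matrix.charpoly, hch, det_Mk, add_pow]
    conv_rhs => rw [Finset.sum_range_succ]
    simp only [Nat.sub_self, pow_zero, mul_one, Nat.choose_self, Nat.cast_one]
    rw [hsum]
    ring
  refine ⟨hcp, fun μ hμ => ?_⟩
  rw [hcp] at hμ
  have h1 : (μ + ω₀) ^ (n+1) = 0 := by simpa [Polynomial.IsRoot] using hμ
  have := pow_eq_zero_iff (n := n+1) (by omega) |>.mp h1
  linarith
end
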